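/- (Example 3, Hamming-distant triples) Let n ≥ 1 and F = (ℤ/2ℤ)^n, and let wt(x) denote the Hamming weight of x ∈ F. Then |{(x,y,z) ∈ F³ : wt(x+y) ≥ 2, wt(y+z) ≥ 2, wt(x+z) ≥ 2}| = 8^n − (3n+3)·4^n + (3n² + 3n + 2)·2^n. -/

import Mathlib

open Finset

/-- The Hamming weight of `x ∈ (ℤ/2ℤ)ⁿ`: the number of nonzero coordinates. -/
def hammingWt {n : ℕ} (x : Fin n → ZMod 2) : ℕ :=
  (Finset.univ.filter fun i => x i ≠ 0).card

namespace HammingTriples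

variable {n : ℕ}

lemma zmod2_cases (a : ZMod 2) : a = 0 ∨ a = 1 := by fin_cases a <;> [exact Or.inl rfl; exact Or.inr rfl]

lemma add_self (x : Fin n → ZMod 2) : x + x = 0 := by
  funext i
  simp only [Pi.add_apply, Pi.zero_apply]
  rcases zmod2_cases (x i) with h | h <;> rw [h] <;> decide

/-- standard basis vector -/
def e (i : Fin n) : Fin n → ZMod 2 := fun j => if j = i then 1 else 0

lemma supp_e (i : Fin n) : (univ.filter fun j => e i j ≠ 0) = {i} := by
  ext j
  simp only [mem_filter, mem_univ, true_and, mem_singleton, e]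
  constructor
  · intro h
    by_contra hc
    simp [hc] at h
  · intro h
    subst h
    simp

lemma wt_e (i : Fin n) : hammingWt (e i) = 1 := by
  rw [hammingWt, supp_e]; simp

lemma wt_zero : hammingWt (0 : Fin n → ZMod 2) = 0 := by simp [hammingWt]

lemma e_ne_zero (i : Fin n) : e i ≠ 0 := by
  intro h
  have := congrFun h i
  simp [e] at this

lemma e_inj : Function.Injective (e (n := n)) := by
  intro i j h
  have := congrFun h i
  simp only [e, if_pos rfl] at this
  by_contra hij
  rw [if_neg hij] at this
  exact one_ne_zero this

lemma wt_le_one_iff (x : Fin n → ZMod 2) :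
    hammingWt x ≤ 1 ↔ x = 0 ∨ ∃ i, x = e i := by
  constructor
  · intro h
    by_cases hx : x = 0
    · exact Or.inl hx
    · right
      have hex : ∃ i, x i ≠ 0 := by
        by_contra hc
        push_neg at hc
        exact hx (funext fun i => hc i)
      obtain ⟨i, hi⟩ := hex
      refine ⟨i, funext fun j => ?_⟩
      rw [hammingWt, card_le_one] at h
      by_cases hj : j = i
      · subst hj
        rcases zmod2_cases (x j) with h0 | h1
        · exact absurd h0 hi
        · rw [h1, e, if_pos rfl]
      · rcases zmod2_cases (x j) with h0 | h1
        · rw [h0, e, if_neg hj]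
        · exfalso
          exact hj (h j (by simp [h1]) i (by simp [hi]))
  · rintro (rfl | ⟨i, rfl⟩)
    · rw [wt_zero]; norm_num
    · rw [wt_e i]

lemma supp_e_add_e {i j : Fin n} (hij : i ≠ j) :
    (univ.filter fun l => (e i + e j) l ≠ 0) = {i, j} := by
  ext l
  rw [mem_filter]
  simp only [mem_filter, mem_univ, true_and, mem_insert, mem_singleton,
    Pi.add_apply, e]
  by_cases h1 : l = i <;> by_cases h2 : l = j
  · exact absurd (h1 ▸ h2) hij
  · subst h1; simp [if_neg h2]
  · subst h2; simp [if_neg h1, Ne.symm hij]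
  · simp [if_neg h1, if_neg h2, h1, h2]

lemma wt_e_add_e {i j : Fin n} (hij : i ≠ j) : ¬ hammingWt (e i + e j) ≤ 1 := by
  rw [hammingWt, supp_e_add_e hij, card_insert_of_notMem (by simpa using hij),
    card_singleton]
  norm_num

/-- the "ball" of weight ≤ 1 -/
def B (n : ℕ) : Finset (Fin n → ZMod 2) := univ.filter fun v => hammingWt v ≤ 1

lemma B_eq : B n = insert 0 (univ.image (e (n := n))) := by
  ext v
  simp only [B, mem_filter, mem_univ, true_and, mem_insert, mem_image]
  rw [wt_le_one_iff]
  constructor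
  · rintro (rfl | ⟨i, rfl⟩)
    · exact Or.inl rfl
    · exact Or.inr ⟨i, rfl⟩
  · rintro (rfl | ⟨i, rfl⟩)
    · exact Or.inl rfl
    · exact Or.inr ⟨i, rfl⟩

lemma zero_not_mem_image : (0 : Fin n → ZMod 2) ∉ univ.image (e (n := n)) := by
  intro h
  obtain ⟨i, -, hi⟩ := mem_image.mp h
  exact e_ne_zero i hi

lemma card_B : (B n).card = n + 1 := by
  rw [B_eq, card_insert_of_notMem zero_not_mem_image,
    card_image_of_injective _ e_inj]
  simp

/-- indicator of the ball -/
def g (v : Fin n → ZMod 2) : ℤ := if hammingWt v ≤ 1 then 1 else 0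

/-- indicator of the complement -/
def f (v : Fin n → ZMod 2) : ℤ := 1 - g v

lemma sum_g : ∑ v : Fin n → ZMod 2, g v = (n : ℤ) + 1 := by
  rw [show (∑ v : Fin n → ZMod 2, g v) = ∑ v : Fin n → ZMod 2,
      (if hammingWt v ≤ 1 then (1 : ℤ) else 0) from rfl, Finset.sum_boole]
  rw [show (univ.filter fun v : Fin n → ZMod 2 => hammingWt v ≤ 1) = B n from rfl, card_B]
  push_cast
  ring

lemma sum_g_shift (c : Fin n → ZMod 2) : ∑ v : Fin n → ZMod 2, g (c + v) = (n : ℤ) + 1 := by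
  rw [← sum_g]
  exact Fintype.sum_equiv (Equiv.addLeft c) _ _ (fun v => rfl)

lemma sum_g_shift' (w : Fin n → ZMod 2) :
    ∑ c : Fin n → ZMod 2, g (c + w) = (n : ℤ) + 1 := by
  rw [← sum_g]
  exact Fintype.sum_equiv (Equiv.addRight w) _ _ (fun v => rfl)

lemma card_F : (Fintype.card (Fin n → ZMod 2)) = 2 ^ n := by simp

lemma sum_one : ∑ _v : Fin n → ZMod 2, (1 : ℤ) = 2 ^ n := by
  rw [Finset.sum_const, card_univ, card_F]
  push_cast
  ring

/-- the key hard count: triples within the ball -/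
lemma sum_ggg :
    ∑ c : Fin n → ZMod 2, g c * ∑ w : Fin n → ZMod 2, g w * g (c + w)
      = 3 * (n : ℤ) + 1 := by
  have hsplit : ∀ c : Fin n → ZMod 2,
      g c * (∑ w : Fin n → ZMod 2, g w * g (c + w))
        = if hammingWt c ≤ 1 then (∑ w : Fin n → ZMod 2, g w * g (c + w)) else 0 := by
    intro c
    rw [g]
    split <;> simp
  rw [Finset.sum_congr rfl fun c _ => hsplit c, ← Finset.sum_filter]
  rw [show (univ.filter fun v : Fin n → ZMod 2 => hammingWt v ≤ 1) = B n from rfl, B_eq]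
  rw [Finset.sum_insert zero_not_mem_image,
    Finset.sum_image (fun i _ j _ h => e_inj h)]
  have h0 : ∑ w : Fin n → ZMod 2, g w * g ((0 : Fin n → ZMod 2) + w) = (n : ℤ) + 1 := by
    have hgg : ∀ w : Fin n → ZMod 2, g w * g ((0 : Fin n → ZMod 2) + w) = g w := by
      intro w
      rw [zero_add, g]
      split <;> simp
    rw [Finset.sum_congr rfl fun w _ => hgg w, sum_g]
  have hi : ∀ i : Fin n, ∑ w : Fin n → ZMod 2, g w * g (e i + w) = 2 := by
    intro i
    have hterm : ∀ w : Fin n → ZMod 2, g w * g (e i + w)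
        = if hammingWt w ≤ 1 ∧ hammingWt (e i + w) ≤ 1 then (1 : ℤ) else 0 := by
      intro w
      rw [g, g]
      by_cases h1 : hammingWt w ≤ 1 <;> by_cases h2 : hammingWt (e i + w) ≤ 1 <;>
        simp [h1, h2]
    rw [Finset.sum_congr rfl fun w _ => hterm w, Finset.sum_boole]
    have hset : (univ.filter fun w : Fin n → ZMod 2 =>
        hammingWt w ≤ 1 ∧ hammingWt (e i + w) ≤ 1) = {0, e i} := by
      ext w
      simp only [mem_filter, mem_univ, true_and, mem_insert, mem_singleton]
      constructor
      · rintro ⟨hw, hw2⟩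
        rcases (wt_le_one_iff w).mp hw with rfl | ⟨j, rfl⟩
        · exact Or.inl rfl
        · by_cases hij : i = j
          · exact Or.inr (by rw [hij])
          · exact absurd hw2 (wt_e_add_e hij)
      · rintro (rfl | rfl)
        · refine ⟨by rw [wt_zero]; norm_num, ?_⟩
          rw [add_zero, wt_e]
        · refine ⟨by rw [wt_e], ?_⟩
          rw [add_self, wt_zero]
          norm_num
    rw [hset, Finset.card_insert_of_notMem (by simp [Ne.symm (e_ne_zero i)]),
      Finset.card_singleton]
    norm_num
  rw [h0, Finset.sum_congr rfl fun i _ => hi i, Finset.sum_const]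
  simp only [card_univ, Fintype.card_fin, nsmul_eq_mul]
  push_cast
  ring

/-- inner double sum over pairs -/
lemma pair_sum :
    ∑ c : Fin n → ZMod 2, ∑ w : Fin n → ZMod 2, f c * f w * f (c + w)
      = 4 ^ n - (3 * (n : ℤ) + 3) * 2 ^ n + (3 * (n : ℤ) ^ 2 + 3 * (n : ℤ) + 2) := by
  have inner : ∀ c : Fin n → ZMod 2,
      ∑ w : Fin n → ZMod 2, f c * f w * f (c + w)
        = f c * (2 ^ n - 2 * ((n : ℤ) + 1) + ∑ w : Fin n → ZMod 2, g w * g (c + w)) := by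
    intro c
    simp only [mul_assoc]
    rw [← Finset.mul_sum]
    congr 1
    have hfw : ∀ w : Fin n → ZMod 2, f w * f (c + w)
        = 1 - g w - g (c + w) + g w * g (c + w) := by
      intro w; rw [f, f]; ring
    rw [Finset.sum_congr rfl fun w _ => hfw w]
    rw [Finset.sum_add_distrib, Finset.sum_sub_distrib, Finset.sum_sub_distrib,
      sum_one, sum_g, sum_g_shift]
    ring
  rw [Finset.sum_congr rfl fun c _ => inner c]
  have expand : ∀ c : Fin n → ZMod 2,
      f c * (2 ^ n - 2 * ((n : ℤ) + 1) + ∑ w : Fin n → ZMod 2, g w * g (c + w))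
        = ((2:ℤ) ^ n - 2 * ((n : ℤ) + 1)) + (∑ w : Fin n → ZMod 2, g w * g (c + w))
          - g c * (2 ^ n - 2 * ((n : ℤ) + 1))
          - g c * ∑ w : Fin n → ZMod 2, g w * g (c + w) := by
    intro c; rw [f]; ring
  rw [Finset.sum_congr rfl fun c _ => expand c]
  rw [Finset.sum_sub_distrib, Finset.sum_sub_distrib, Finset.sum_add_distrib]
  have h1 : ∑ _c : Fin n → ZMod 2, ((2:ℤ) ^ n - 2 * ((n : ℤ) + 1)) =
      2 ^ n * (2 ^ n - 2 * ((n:ℤ) + 1)) := by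
    rw [Finset.sum_const, card_univ, card_F]
    push_cast
    ring
  have h2 : ∑ c : Fin n → ZMod 2, ∑ w : Fin n → ZMod 2, g w * g (c + w)
      = ((n : ℤ) + 1) ^ 2 := by
    rw [Finset.sum_comm]
    have hw : ∀ w : Fin n → ZMod 2, ∑ c : Fin n → ZMod 2, g w * g (c + w)
        = g w * ((n : ℤ) + 1) := by
      intro w
      rw [← Finset.mul_sum, sum_g_shift']
    rw [Finset.sum_congr rfl fun w _ => hw w, ← Finset.sum_mul, sum_g]
    ring
  have h3 : ∑ c : Fin n → ZMod 2, g c * ((2:ℤ) ^ n - 2 * ((n : ℤ) + 1))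
      = ((n : ℤ) + 1) * (2 ^ n - 2 * ((n:ℤ) + 1)) := by
    rw [← Finset.sum_mul, sum_g]
  rw [h1, h2, h3, sum_ggg]
  have h4 : (4 : ℤ) ^ n = 2 ^ n * 2 ^ n := by rw [← mul_pow]; norm_num
  rw [h4]; ring

end HammingTriples

open HammingTriples in
theorem card_hamming_distant_triples (n : ℕ) (hn : 1 ≤ n) :
    (Nat.card {p : (Fin n → ZMod 2) × (Fin n → ZMod 2) × (Fin n → ZMod 2) //
        2 ≤ hammingWt (p.1 + p.2.1) ∧ 2 ≤ hammingWt (p.2.1 + p.2.2) ∧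
          2 ≤ hammingWt (p.1 + p.2.2)} : ℤ)
      = 8 ^ n - (3 * (n : ℤ) + 3) * 4 ^ n + (3 * (n : ℤ) ^ 2 + 3 * (n : ℤ) + 2) * 2 ^ n := by
  rw [Nat.card_eq_fintype_card, Fintype.card_subtype, ← Finset.sum_boole]
  rw [Fintype.sum_prod_type]
  have hrw : ∀ x : Fin n → ZMod 2,
      (∑ q : (Fin n → ZMod 2) × (Fin n → ZMod 2),
        if 2 ≤ hammingWt ((x, q).1 + (x, q).2.1) ∧
            2 ≤ hammingWt ((x, q).2.1 + (x, q).2.2) ∧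
            2 ≤ hammingWt ((x, q).1 + (x, q).2.2) then (1 : ℤ) else 0)
      = ∑ y : Fin n → ZMod 2, ∑ z : Fin n → ZMod 2,
          f (x + y) * f (y + z) * f (x + z) := by
    intro x
    rw [Fintype.sum_prod_type]
    refine Finset.sum_congr rfl fun y _ => Finset.sum_congr rfl fun z _ => ?_
    have hv : ∀ v : Fin n → ZMod 2, (2 ≤ hammingWt v ↔ ¬ hammingWt v ≤ 1) := by
      intro v; omega
    simp only [f, g]
    by_cases h1 : hammingWt (x + y) ≤ 1 <;>
      by_cases h2 : hammingWt (y + z) ≤ 1 <;>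
      by_cases h3 : hammingWt (x + z) ≤ 1 <;>
      simp [hv, h1, h2, h3]
  rw [Finset.sum_congr rfl fun x _ => hrw x]
  have step1 : ∀ x y : Fin n → ZMod 2,
      (∑ z : Fin n → ZMod 2, f (x + y) * f (y + z) * f (x + z))
        = ∑ w : Fin n → ZMod 2, f (x + y) * f w * f ((x + y) + w) := by
    intro x y
    refine Fintype.sum_equiv (Equiv.addLeft y) _ _ (fun z => ?_)
    simp only [Equiv.coe_addLeft]
    have hz : (x + y) + (y + z) = x + z := by
      have h := add_self y
      linear_combination h
    rw [hz]
  have step2 : ∀ x : Fin n → ZMod 2,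
      (∑ y : Fin n → ZMod 2, ∑ w : Fin n → ZMod 2, f (x + y) * f w * f ((x + y) + w))
        = ∑ c : Fin n → ZMod 2, ∑ w : Fin n → ZMod 2, f c * f w * f (c + w) := by
    intro x
    exact Fintype.sum_equiv (Equiv.addLeft x) _ _ (fun y => rfl)
  have step3 : ∀ x : Fin n → ZMod 2,
      (∑ y : Fin n → ZMod 2, ∑ z : Fin n → ZMod 2, f (x + y) * f (y + z) * f (x + z))
        = ∑ c : Fin n → ZMod 2, ∑ w : Fin n → ZMod 2, f c * f w * f (c + w) := by
    intro x
    rw [Finset.sum_congr rfl fun y _ => step1 x y, step2 x]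
  rw [Finset.sum_congr rfl fun x _ => step3 x, Finset.sum_const, card_univ, card_F,
    pair_sum]
  have h4 : (4 : ℤ) ^ n = 2 ^ n * 2 ^ n := by rw [← mul_pow]; norm_num
  have h8 : (8 : ℤ) ^ n = 2 ^ n * (2 ^ n * 2 ^ n) := by
    rw [← mul_assoc, ← mul_pow, ← mul_pow]; norm_num
  rw [nsmul_eq_mul]
  push_cast
  rw [h4, h8]
  ring
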